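/- For all real numbers z1 < 0 and z2 < 0, the inequality e^{z1 + z2} ≥ −1/3 + 4/(3(1 − z1)(1 − z2)) holds. -/

import Mathlib

private lemma FIE_hasDerivAt (t : ℝ) :
    HasDerivAt (fun t : ℝ => 3 * (1 + t) - (3 - t) * Real.exp t)
      (3 - (2 - t) * Real.exp t) t := by
  have h1 : HasDerivAt (fun t : ℝ => 3 * (1 + t)) 3 t := by
    simpa using ((hasDerivAt_id t).const_add (1 : ℝ)).const_mul (3 : ℝ)
  have h2 : HasDerivAt (fun t : ℝ => (3 - t) * Real.exp t)
      ((-1) * Real.exp t + (3 - t) * Real.exp t) t := by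
    simpa using ((hasDerivAt_const t (3 : ℝ)).fun_sub (hasDerivAt_id t)).fun_mul (Real.hasDerivAt_exp t)
  have := h1.fun_sub h2
  rw [show (3 - (2 - t) * Real.exp t) = 3 - (-1 * Real.exp t + (3 - t) * Real.exp t) by ring]
  exact this

private lemma FIE_key {t : ℝ} (ht : 0 ≤ t) : (3 - t) * Real.exp t ≤ 3 * (1 + t) := by
  set f : ℝ → ℝ := fun t => 3 * (1 + t) - (3 - t) * Real.exp t with hf
  have hmono : MonotoneOn f (Set.Ici 0) := by
    apply monotoneOn_of_deriv_nonneg (convex_Ici 0)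
    · exact (Continuous.sub (by continuity) (by continuity)).continuousOn
    · intro x _
      exact (FIE_hasDerivAt x).differentiableAt.differentiableWithinAt
    · intro x _
      rw [(FIE_hasDerivAt x).deriv]
      have he : 2 - x ≤ Real.exp (1 - x) := by
        have := Real.add_one_le_exp (1 - x)
        linarith
      have hmul : (2 - x) * Real.exp x ≤ Real.exp (1 - x) * Real.exp x :=
        mul_le_mul_of_nonneg_right he (Real.exp_pos x).le
      have heq : Real.exp (1 - x) * Real.exp x = Real.exp 1 := by
        rw [← Real.exp_add]; ring_nf
      have h3 : Real.exp 1 < 3 := by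
        have := Real.exp_one_lt_d9
        linarith
      rw [heq] at hmul
      linarith
  have h0 : f 0 ≤ f t := hmono (Set.self_mem_Ici) ht ht
  have hf0 : f 0 = 0 := by simp [hf]
  have : 0 ≤ f t := by rw [← hf0]; exact h0
  simp only [hf] at this
  linarith

/-- Limiting-case inequality for the Parareal/FIE-FIE convergence proof. -/
theorem exp_ge_FIE_limit (z1 z2 : ℝ) (h1 : z1 < 0) (h2 : z2 < 0) :
    Real.exp (z1 + z2) ≥ -1 / 3 + 4 / (3 * ((1 - z1) * (1 - z2))) := by
  set s : ℝ := z1 + z2 with hs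
  have hsneg : s < 0 := by simp [hs]; linarith
  have hexp : 0 < Real.exp s := Real.exp_pos s
  -- key inequality: 3 + s ≤ 3 * (1 - s) * exp s
  have hkey : 3 + s ≤ 3 * (1 - s) * Real.exp s := by
    have h := FIE_key (t := -s) (by linarith)
    rw [Real.exp_neg] at h
    have hinv : (Real.exp s)⁻¹ * Real.exp s = 1 := inv_mul_cancel₀ hexp.ne'
    have := mul_le_mul_of_nonneg_right h hexp.le
    nlinarith [this, hinv, hexp]
  have hp : 0 < 3 * ((1 - z1) * (1 - z2)) := by nlinarith
  rw [ge_iff_le, ← sub_nonneg]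
  have hzz : 0 < z1 * z2 := mul_pos_of_neg_of_neg h1 h2
  have hdiv : 4 / (3 * ((1 - z1) * (1 - z2))) ≤ Real.exp s + 1 / 3 := by
    rw [div_le_iff₀ hp]
    nlinarith [hkey, mul_pos hzz hexp, hexp]
  linarith
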